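/- In ℤ[C₅], let σᵢ be the ring automorphism induced by t ↦ tⁱ for i coprime to 5. Then σ₄(u₅) = u₅ exactly, while u₅ and σ₂(u₅) = 1 − t² − t³ are distinct modulo trivial units: for every sign ε ∈ {1,−1} and every k ∈ {0,1,2,3,4}, one has u₅ ≠ ε·tᵏ and σ₂(u₅) ≠ ε·tᵏ·u₅. Hence u₅ and σ₂(u₅) represent two distinct nontrivial elements of Wh(C₅) = ℤ[C₅]ˣ/(±C₅) interchanged only by σ₂, and the orbit of the class of u₅ under the automorphisms σᵢ has exactly two elements. -/

import Mathlib

/-- `C₅`, the multiplicative cyclic group of order 5. -/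
abbrev C5 : Type := Multiplicative (ZMod 5)

/-- The generator `t` of `C₅`, viewed inside the integral group ring `ℤ[C₅]`. -/
noncomputable def t : MonoidAlgebra ℤ C5 :=
  MonoidAlgebra.of ℤ C5 (Multiplicative.ofAdd (1 : ZMod 5))

/-- The unit `u₅ = 1 − t − t⁴` of `ℤ[C₅]`. -/
noncomputable def u5 : MonoidAlgebra ℤ C5 := 1 - t - t ^ 4

/-- `σᵢ`, the ring automorphism of `ℤ[C₅]` induced by the group automorphism `t ↦ tⁱ`. -/
noncomputable def sigma (i : ℕ) : MonoidAlgebra ℤ C5 →+* MonoidAlgebra ℤ C5 :=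
  MonoidAlgebra.mapDomainRingHom ℤ (powMonoidHom i : C5 →* C5)

lemma ofAdd_pow (a : ZMod 5) (i : ℕ) :
    (Multiplicative.ofAdd a) ^ i = Multiplicative.ofAdd ((i : ZMod 5) * a) := by
  induction i with
  | zero => simp
  | succ n ih => rw [pow_succ, ih, ← ofAdd_add]; push_cast; ring_nf

lemma t_pow (k : ℕ) : t ^ k = MonoidAlgebra.single (Multiplicative.ofAdd ((k : ZMod 5))) 1 := by
  simp [t, MonoidAlgebra.of_apply, MonoidAlgebra.single_pow, ofAdd_pow]

lemma t_pow_eq (k m : ℕ) (h : (k : ZMod 5) = m) : t ^ k = t ^ m := by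
  rw [t_pow, t_pow, h]

lemma sigma_t_pow (i k : ℕ) : sigma i (t ^ k) = t ^ (i * k) := by
  rw [t_pow, t_pow]
  simp [sigma, MonoidAlgebra.mapDomainRingHom, powMonoidHom, ofAdd_pow]

lemma sigma_u5 (i : ℕ) : sigma i u5 = 1 - t ^ i - t ^ (i * 4) := by
  have h1 : sigma i t = t ^ i := by simpa using sigma_t_pow i 1
  simp [u5, map_sub, h1, ← map_pow, sigma_t_pow]

lemma coeff_congr {a b : MonoidAlgebra ℤ C5} (h : a = b) (g : C5) : a.coeff g = b.coeff g := by rw [h]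

lemma coeff_sub (a b : MonoidAlgebra ℤ C5) (g : C5) : (a - b).coeff g = a.coeff g - b.coeff g :=
  Finsupp.sub_apply a.coeff b.coeff g

lemma coeff_neg (a : MonoidAlgebra ℤ C5) (g : C5) : (-a).coeff g = -(a.coeff g) :=
  Finsupp.neg_apply a.coeff g

lemma coeff_single (a : C5) (c : ℤ) (g : C5) :
    (MonoidAlgebra.single a c).coeff g = if a = g then c else 0 := Finsupp.single_apply

lemma coeff_one (g : C5) : (1 : MonoidAlgebra ℤ C5).coeff g = if (1 : C5) = g then 1 else 0 := by
  rw [MonoidAlgebra.one_def]; exact coeff_single _ _ _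

lemma ofAdd_eq_iff (a b : ZMod 5) :
    Multiplicative.ofAdd a = Multiplicative.ofAdd b ↔ a = b := Iff.rfl

lemma one_eq_ofAdd : (1 : C5) = Multiplicative.ofAdd (0 : ZMod 5) := rfl

lemma u5_eq : u5 = 1 - t ^ 1 - t ^ 4 := by rw [u5, pow_one]

/-- `σ₄(u₅) = u₅` exactly, while `u₅` and `σ₂(u₅) = 1 − t² − t³` are
distinct modulo trivial units `±tᵏ` (and `u₅` is not a trivial unit).  Moreover
`σ₃(u₅) = σ₂(u₅)`, so the orbit of the class of `u₅` in `Wh(C₅) = ℤ[C₅]ˣ/(±C₅)` under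
the automorphisms `σᵢ` has exactly the two elements `[u₅]` and `[σ₂(u₅)]`. -/
theorem u5_orbit :
    sigma 4 u5 = u5 ∧
    sigma 2 u5 = 1 - t ^ 2 - t ^ 3 ∧
    sigma 3 u5 = sigma 2 u5 ∧
    (∀ ε : MonoidAlgebra ℤ C5, (ε = 1 ∨ ε = -1) → ∀ k : ℕ, k ≤ 4 →
      u5 ≠ ε * t ^ k ∧ sigma 2 u5 ≠ ε * t ^ k * u5) := by
  refine ⟨?_, ?_, ?_, ?_⟩
  · rw [sigma_u5, u5_eq, t_pow_eq 16 1 (by decide)]; ring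
  · rw [sigma_u5, t_pow_eq 8 3 (by decide)]
  · rw [sigma_u5, sigma_u5, t_pow_eq 12 2 (by decide), t_pow_eq 8 3 (by decide)]; ring
  · rintro ε (rfl | rfl) k hk <;> interval_cases k <;> constructor <;>
    · intro h
      try rw [sigma_u5] at h
      simp only [one_mul, neg_one_mul, neg_mul, u5_eq, mul_sub, mul_one, ← pow_add] at h
      have h1 := coeff_congr h (Multiplicative.ofAdd (0 : ZMod 5))
      have h2 := coeff_congr h (Multiplicative.ofAdd (1 : ZMod 5))
      have h3 := coeff_congr h (Multiplicative.ofAdd (2 : ZMod 5))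
      have h4 := coeff_congr h (Multiplicative.ofAdd (3 : ZMod 5))
      have h5 := coeff_congr h (Multiplicative.ofAdd (4 : ZMod 5))
      simp only [t_pow, coeff_sub, coeff_neg, coeff_single, coeff_one, one_eq_ofAdd,
        ofAdd_eq_iff, Nat.cast_zero, Nat.cast_one, Nat.cast_ofNat] at h1 h2 h3 h4 h5
      revert h1 h2 h3 h4 h5
      decide
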